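/- Let w_n = sqrt(1 + 2·sqrt(1 + 3·sqrt(1 + ... + n·sqrt(1)))). Then for every n ≥ 1, 0 ≤ w_{n+1} - w_n ≤ ((n+1)/2^n) · ∏_{i=1}^n i^{2^{-(n-i)}} ≤ n^2·(n+1)/2^n. -/

import Mathlib

/-- Tails of the Ramanujan radical: `ramTail n i = i * sqrt (1 + ramTail n (i+1))` for
`i ≤ n` and `0` otherwise, so that `ramTail n 1 = sqrt (1 + 2 * sqrt (1 + ⋯ + n * sqrt 1))`
is the `n`-th approximant `w n`. -/
noncomputable def ramTail (n : ℕ) : ℕ → ℝ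
  | i => if _ : i ≤ n then (i : ℝ) * Real.sqrt (1 + ramTail n (i + 1)) else 0
termination_by i => n + 1 - i
decreasing_by omega

lemma ramTail_def (n i : ℕ) :
    ramTail n i = if i ≤ n then (i : ℝ) * Real.sqrt (1 + ramTail n (i + 1)) else 0 := by
  rw [ramTail]; split <;> simp_all

lemma ramTail_nonneg (n i : ℕ) : 0 ≤ ramTail n i := by
  rw [ramTail_def]; split
  · positivity
  · exact le_refl 0

lemma ramTail_mono (n i : ℕ) : ramTail n i ≤ ramTail (n + 1) i := by
  have key : ∀ k i, n + 2 - i ≤ k → ramTail n i ≤ ramTail (n + 1) i := by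
    intro k
    induction k with
    | zero =>
      intro i h
      rw [ramTail_def n i, if_neg (show ¬ i ≤ n by omega)]
      exact ramTail_nonneg _ _
    | succ k ih =>
      intro i h
      by_cases hi : i ≤ n
      · rw [ramTail_def n i, ramTail_def (n + 1) i, if_pos hi,
          if_pos (show i ≤ n + 1 by omega)]
        have hih := ih (i + 1) (by omega)
        exact mul_le_mul_of_nonneg_left
          (Real.sqrt_le_sqrt (by linarith)) (Nat.cast_nonneg i)
      · rw [ramTail_def n i, if_neg hi]
        exact ramTail_nonneg _ _
  exact key (n + 2) i (by omega)

lemma sqrt_diff_le {a b : ℝ} (hb : 0 < b) (hab : b ≤ a) :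
    Real.sqrt a - Real.sqrt b ≤ (a - b) / (2 * Real.sqrt b) := by
  set s := Real.sqrt b with hs
  have hsb : 0 < s := Real.sqrt_pos.mpr hb
  have hbb : s ^ 2 = b := Real.sq_sqrt hb.le
  set d := (a - b) / (2 * s) with hd
  have hd0 : 0 ≤ d := by
    apply div_nonneg (by linarith) (by positivity)
  have h2sd : 2 * s * d = a - b := by
    rw [hd]; field_simp
  have h1 : a ≤ (s + d) ^ 2 := by nlinarith [sq_nonneg d]
  have h3 : Real.sqrt a ≤ s + d := by
    calc Real.sqrt a ≤ Real.sqrt ((s + d) ^ 2) := Real.sqrt_le_sqrt h1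
      _ = s + d := Real.sqrt_sq (by linarith)
  linarith

lemma ramTail_last (n : ℕ) (hn : 1 ≤ n) : ramTail n n = (n : ℝ) := by
  rw [ramTail_def n n, if_pos le_rfl, ramTail_def n (n+1), if_neg (by omega)]
  simp

lemma ramTail_lb (n : ℕ) : ∀ j, 1 ≤ j → j ≤ n →
    (j : ℝ) ^ (2 - ((2 : ℝ) ^ (n - j))⁻¹) ≤ ramTail n j := by
  have key : ∀ k j, n - j ≤ k → 1 ≤ j → j ≤ n →
      (j : ℝ) ^ (2 - ((2 : ℝ) ^ (n - j))⁻¹) ≤ ramTail n j := by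
    intro k
    induction k with
    | zero =>
      intro j hk h1 h2
      have hjn : j = n := by omega
      subst hjn
      rw [ramTail_last j h1, Nat.sub_self]
      norm_num
    | succ k ih =>
      intro j hk h1 h2
      rcases eq_or_lt_of_le h2 with hjn | hjn
      · subst hjn
        rw [ramTail_last j h1, Nat.sub_self]
        norm_num
      · -- j < n
        have hj0 : (0:ℝ) < j := by exact_mod_cast h1
        set e : ℝ := 2 - ((2 : ℝ) ^ (n - (j+1)))⁻¹ with he
        have he0 : 0 ≤ e := by
          have : ((2:ℝ) ^ (n - (j+1)))⁻¹ ≤ 1 := by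
            rw [inv_le_one_iff₀]
            right
            exact one_le_pow₀ (by norm_num)
          rw [he]; linarith
        have hT : ((j:ℝ)+1) ^ e ≤ ramTail n (j+1) := by
          have := ih (j+1) (by omega) (by omega) (by omega)
          simpa using this
        have hjj : (j:ℝ) ^ e ≤ ((j:ℝ)+1) ^ e :=
          Real.rpow_le_rpow hj0.le (by linarith) he0
        have hT2 : (j:ℝ) ^ e ≤ 1 + ramTail n (j+1) := by
          have := ramTail_nonneg n (j+1)
          nlinarith [hT, hjj]
        have hsq : (j:ℝ) ^ (e / 2) ≤ Real.sqrt (1 + ramTail n (j+1)) := by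
          have h5 : Real.sqrt ((j:ℝ) ^ e) ≤ Real.sqrt (1 + ramTail n (j+1)) :=
            Real.sqrt_le_sqrt hT2
          calc (j:ℝ) ^ (e / 2) = ((j:ℝ) ^ e) ^ ((1:ℝ)/2) := by
                rw [← Real.rpow_mul hj0.le]; ring_nf
            _ = Real.sqrt ((j:ℝ) ^ e) := (Real.sqrt_eq_rpow _).symm
            _ ≤ _ := h5
        rw [ramTail_def n j, if_pos (le_of_lt hjn)]
        have hexp : 2 - ((2 : ℝ) ^ (n - j))⁻¹ = 1 + e / 2 := by
          have hnj : n - j = (n - (j+1)) + 1 := by omega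
          rw [he, hnj, pow_succ]
          have hp : (0:ℝ) < (2:ℝ) ^ (n - (j+1)) := by positivity
          field_simp
          ring
        rw [hexp, Real.rpow_add hj0, Real.rpow_one]
        exact mul_le_mul_of_nonneg_left hsq hj0.le
  exact fun j => key n j (by omega)

lemma diff_bound (n : ℕ) (hn : 1 ≤ n) : ∀ i, 1 ≤ i → i ≤ n + 1 →
    ramTail (n + 1) i - ramTail n i ≤
      (((n : ℝ) + 1) / 2 ^ (n + 1 - i)) *
        ∏ j ∈ Finset.Icc i n, (j : ℝ) ^ (((2 : ℝ) ^ (n - j))⁻¹) := by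
  have key : ∀ k i, n + 1 - i ≤ k → 1 ≤ i → i ≤ n + 1 →
      ramTail (n + 1) i - ramTail n i ≤
      (((n : ℝ) + 1) / 2 ^ (n + 1 - i)) *
        ∏ j ∈ Finset.Icc i n, (j : ℝ) ^ (((2 : ℝ) ^ (n - j))⁻¹) := by
    intro k
    induction k with
    | zero =>
      intro i hk h1 h2
      have hi : i = n + 1 := by omega
      subst hi
      rw [ramTail_def (n+1) (n+1), if_pos le_rfl, ramTail_def n (n+1), if_neg (by omega),
        ramTail_def (n+1) (n+2), if_neg (by omega), Nat.sub_self,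
        Finset.Icc_eq_empty (by omega), Finset.prod_empty]
      simp
    | succ k ih =>
      intro i hk h1 h2
      rcases eq_or_lt_of_le h2 with hin | hin
      · subst hin
        rw [ramTail_def (n+1) (n+1), if_pos le_rfl, ramTail_def n (n+1), if_neg (by omega),
          ramTail_def (n+1) (n+2), if_neg (by omega), Nat.sub_self,
          Finset.Icc_eq_empty (by omega), Finset.prod_empty]
        simp
      · have hik : i ≤ n := by omega
        have hi0 : (0:ℝ) < i := by exact_mod_cast h1
        set T : ℝ := ramTail n (i+1) with hT
        set T' : ℝ := ramTail (n+1) (i+1) with hT'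
        have hT0 : 0 ≤ T := ramTail_nonneg _ _
        have hTT : T ≤ T' := ramTail_mono n (i+1)
        set S : ℝ := Real.sqrt (1 + T) with hS
        have hS1 : 1 ≤ S := by
          have : Real.sqrt 1 ≤ S := Real.sqrt_le_sqrt (by linarith)
          rwa [Real.sqrt_one] at this
        have hS0 : 0 < S := by linarith
        set ε : ℝ := ((2 : ℝ) ^ (n - i))⁻¹ with hε
        have hε0 : 0 ≤ ε := by positivity
        have hε1 : ε ≤ 1 := by
          rw [hε, inv_le_one_iff₀]; right; exact one_le_pow₀ (by norm_num)
        -- key inequality : i ≤ i^ε * S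
        have hkey : (i:ℝ) ≤ (i:ℝ) ^ ε * S := by
          rcases eq_or_lt_of_le hik with hii | hii
          · -- i = n : T = ramTail n (n+1) = 0, S = 1, ε = 1
            have hTz : T = 0 := by rw [hT, ramTail_def, if_neg (by omega)]
            have hSe : S = 1 := by rw [hS, hTz]; simp
            have hεe : ε = 1 := by rw [hε, show n - i = 0 by omega]; simp
            rw [hSe, hεe, Real.rpow_one, mul_one]
          · -- i < n
            have hlb := ramTail_lb n (i+1) (by omega) (by omega)
            set e : ℝ := 2 - ((2 : ℝ) ^ (n - (i+1)))⁻¹ with he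
            have hii' : (i:ℝ) ^ e ≤ 1 + T := by
              have he0 : 0 ≤ e := by
                have : ((2:ℝ) ^ (n - (i+1)))⁻¹ ≤ 1 := by
                  rw [inv_le_one_iff₀]; right; exact one_le_pow₀ (by norm_num)
                rw [he]; linarith
              have : (i:ℝ) ^ e ≤ ((i:ℝ)+1) ^ e :=
                Real.rpow_le_rpow hi0.le (by linarith) he0
              have h7 : ((i:ℝ)+1) ^ e ≤ T := by
                rw [hT]; exact_mod_cast hlb
              linarith
            have hsq : (i:ℝ) ^ (e / 2) ≤ S := by
              calc (i:ℝ) ^ (e / 2) = ((i:ℝ) ^ e) ^ ((1:ℝ)/2) := by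
                    rw [← Real.rpow_mul hi0.le]; ring_nf
                _ = Real.sqrt ((i:ℝ) ^ e) := (Real.sqrt_eq_rpow _).symm
                _ ≤ S := Real.sqrt_le_sqrt hii'
            have hexp : ε + e / 2 = 1 := by
              have hnj : n - i = (n - (i+1)) + 1 := by omega
              rw [hε, he, hnj, pow_succ]
              have hp : (0:ℝ) < (2:ℝ) ^ (n - (i+1)) := by positivity
              field_simp
              ring
            calc (i:ℝ) = (i:ℝ) ^ (ε + e/2) := by rw [hexp, Real.rpow_one]
              _ = (i:ℝ) ^ ε * (i:ℝ) ^ (e/2) := Real.rpow_add hi0 _ _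
              _ ≤ (i:ℝ) ^ ε * S := by
                  exact mul_le_mul_of_nonneg_left hsq (Real.rpow_nonneg hi0.le _)
        -- now the main chain
        have hih := ih (i+1) (by omega) (by omega) (by omega)
        rw [show n + 1 - (i+1) = n - i from by omega] at hih
        set P : ℝ := ∏ j ∈ Finset.Icc (i+1) n, (j : ℝ) ^ (((2 : ℝ) ^ (n - j))⁻¹) with hP
        have hP0 : 0 ≤ P := Finset.prod_nonneg fun j _ => Real.rpow_nonneg (Nat.cast_nonneg j) _
        have hprodsplit : ∏ j ∈ Finset.Icc i n, (j : ℝ) ^ (((2 : ℝ) ^ (n - j))⁻¹)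
            = (i:ℝ) ^ ε * P := by
          have hins : Finset.Icc i n = insert i (Finset.Icc (i+1) n) := by
            ext x; simp only [Finset.mem_Icc, Finset.mem_insert]; omega
          rw [hins, Finset.prod_insert (by simp only [Finset.mem_Icc]; omega)]
        have hdiff : ramTail (n+1) i - ramTail n i = (i:ℝ) * (Real.sqrt (1+T') - S) := by
          rw [ramTail_def (n+1) i, if_pos (by omega), ramTail_def n i, if_pos hik]
          ring
        have hstep1 : Real.sqrt (1+T') - S ≤ (T' - T) / (2 * S) := by
          have := sqrt_diff_le (show (0:ℝ) < 1 + T by linarith) (show 1+T ≤ 1+T' by linarith)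
          rw [hS]
          convert this using 2
          ring
        have hiε0 : 0 ≤ (i:ℝ) ^ ε := Real.rpow_nonneg hi0.le _
        have hfin : ramTail (n+1) i - ramTail n i ≤ (i:ℝ)^ε * ((T' - T)/2) := by
          rw [hdiff]
          calc (i:ℝ) * (Real.sqrt (1+T') - S) ≤ (i:ℝ) * ((T'-T)/(2*S)) :=
                mul_le_mul_of_nonneg_left hstep1 hi0.le
            _ = ((i:ℝ)/S) * ((T'-T)/2) := by
                rw [div_mul_div_comm, mul_comm S 2, mul_div_assoc]
            _ ≤ (i:ℝ)^ε * ((T'-T)/2) := by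
                apply mul_le_mul_of_nonneg_right _ (by linarith)
                rw [div_le_iff₀ hS0]
                exact hkey
        calc ramTail (n+1) i - ramTail n i ≤ (i:ℝ)^ε * ((T' - T)/2) := hfin
          _ ≤ (i:ℝ)^ε * (((((n : ℝ) + 1) / 2 ^ (n - i)) * P)/2) := by
              apply mul_le_mul_of_nonneg_left _ hiε0
              apply div_le_div_of_nonneg_right ?_ (by norm_num)
              exact hih
          _ = (((n : ℝ) + 1) / 2 ^ (n + 1 - i)) * ((i:ℝ)^ε * P) := by
              rw [show n + 1 - i = (n - i) + 1 from by omega, pow_succ]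
              ring
          _ = _ := by rw [hprodsplit]
  exact fun i => key (n + 1) i (by omega)

lemma rpow_finset_sum {x : ℝ} (hx : 0 < x) (s : Finset ℕ) (f : ℕ → ℝ) :
    x ^ (∑ i ∈ s, f i) = ∏ i ∈ s, x ^ f i := by
  induction s using Finset.cons_induction with
  | empty => simp
  | cons a s ha ih => rw [Finset.sum_cons, Finset.prod_cons, Real.rpow_add hx, ih]

lemma sum_inv_pow_le (n : ℕ) : ∑ i ∈ Finset.Icc 1 n, ((2:ℝ) ^ (n - i))⁻¹ ≤ 2 := by
  have h : ∑ i ∈ Finset.Icc 1 n, ((2:ℝ) ^ (n - i))⁻¹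
      = ∑ k ∈ Finset.range n, ((2:ℝ) ^ k)⁻¹ := by
    apply Finset.sum_nbij' (fun i => n - i) (fun k => n - k)
    · intro a ha; simp only [Finset.mem_Icc] at ha; simp only [Finset.mem_range]; omega
    · intro a ha; simp only [Finset.mem_range] at ha; simp only [Finset.mem_Icc]; omega
    · intro a ha; simp only [Finset.mem_Icc] at ha; omega
    · intro a ha; simp only [Finset.mem_range] at ha; omega
    · intro a _; rfl
  rw [h]
  have := sum_geometric_two_le n
  calc ∑ k ∈ Finset.range n, ((2:ℝ) ^ k)⁻¹
      = ∑ k ∈ Finset.range n, (1/(2:ℝ)) ^ k := by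
        apply Finset.sum_congr rfl; intro k _; rw [one_div, inv_pow]
    _ ≤ 2 := this

theorem ramanujan_difference_bound :
    ∀ n, 1 ≤ n →
      0 ≤ ramTail (n + 1) 1 - ramTail n 1 ∧
      ramTail (n + 1) 1 - ramTail n 1 ≤
        (((n : ℝ) + 1) / 2 ^ n) * ∏ i ∈ Finset.Icc 1 n, (i : ℝ) ^ (((2 : ℝ) ^ (n - i))⁻¹) ∧
      (((n : ℝ) + 1) / 2 ^ n) * ∏ i ∈ Finset.Icc 1 n, (i : ℝ) ^ (((2 : ℝ) ^ (n - i))⁻¹) ≤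
        (n : ℝ) ^ 2 * ((n : ℝ) + 1) / 2 ^ n := by
  intro n hn
  have hn0 : (0:ℝ) < n := by exact_mod_cast hn
  refine ⟨sub_nonneg.mpr (ramTail_mono n 1), ?_, ?_⟩
  · have := diff_bound n hn 1 le_rfl (by omega)
    rwa [show n + 1 - 1 = n from by omega] at this
  · have hprod : ∏ i ∈ Finset.Icc 1 n, (i : ℝ) ^ (((2 : ℝ) ^ (n - i))⁻¹) ≤ (n:ℝ) ^ 2 := by
      have h1 : ∏ i ∈ Finset.Icc 1 n, (i : ℝ) ^ (((2 : ℝ) ^ (n - i))⁻¹)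
          ≤ ∏ i ∈ Finset.Icc 1 n, (n : ℝ) ^ (((2 : ℝ) ^ (n - i))⁻¹) := by
        apply Finset.prod_le_prod
        · intro i _; exact Real.rpow_nonneg (Nat.cast_nonneg i) _
        · intro i hi
          simp only [Finset.mem_Icc] at hi
          exact Real.rpow_le_rpow (Nat.cast_nonneg i) (by exact_mod_cast hi.2) (by positivity)
      have h2 : ∏ i ∈ Finset.Icc 1 n, (n : ℝ) ^ (((2 : ℝ) ^ (n - i))⁻¹)
          = (n:ℝ) ^ (∑ i ∈ Finset.Icc 1 n, ((2:ℝ) ^ (n - i))⁻¹) :=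
        (rpow_finset_sum hn0 _ _).symm
      have h3 : (n:ℝ) ^ (∑ i ∈ Finset.Icc 1 n, ((2:ℝ) ^ (n - i))⁻¹) ≤ (n:ℝ) ^ (2:ℝ) :=
        Real.rpow_le_rpow_of_exponent_le (by exact_mod_cast hn) (sum_inv_pow_le n)
      have h4 : (n:ℝ) ^ (2:ℝ) = (n:ℝ) ^ 2 := by
        rw [show (2:ℝ) = ((2:ℕ):ℝ) from by norm_num, Real.rpow_natCast]
      calc _ ≤ _ := h1
        _ = _ := h2
        _ ≤ _ := h3
        _ = _ := h4
    calc (((n : ℝ) + 1) / 2 ^ n) * ∏ i ∈ Finset.Icc 1 n, (i : ℝ) ^ (((2 : ℝ) ^ (n - i))⁻¹)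
        ≤ (((n : ℝ) + 1) / 2 ^ n) * (n:ℝ)^2 := by
          apply mul_le_mul_of_nonneg_left hprod (by positivity)
      _ = (n : ℝ) ^ 2 * ((n : ℝ) + 1) / 2 ^ n := by ring
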